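/- arXiv:2201.13383 — 2 statements merged into one kernel-verified Lean document; each statement's English description precedes it below -/
import Mathlib

section
/- Let g : H → ℝ be a differentiable strictly convex function on a Hilbert space H inducing the Bregman distance D_g(x, y) = g(x) − g(y) − ⟨∇g(y), x − y⟩, and let f : H → ℝ be proper convex lower semicontinuous. Define T(x) = argmin_u [ f(u) + D_g(u, x) ] (assumed to exist and be single-valued). Then T is D-firm: for all x, y ∈ H, ⟨T x − T y, ∇g(T x) − ∇g(T y)⟩ ≤ ⟨T x − T y, ∇g(x) − ∇g(y)⟩. -/
open InnerProductSpace
open scoped RealInnerProductSpace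

/-- D-firmness of Bregman proximal operators: if `g` is differentiable and
strictly convex on a real Hilbert space, `D_g(x,y) = g(x) − g(y) − ⟪∇g(y), x−y⟫`
is the induced Bregman distance, `f` is proper convex lsc, and
`T(x) = argmin_u [f(u) + D_g(u,x)]`, then for all `x, y`,
`⟪Tx − Ty, ∇g(Tx) − ∇g(Ty)⟫ ≤ ⟪Tx − Ty, ∇g(x) − ∇g(y)⟫`. -/
theorem bregman_prox_D_firm
    {H : Type*} [NormedAddCommGroup H] [InnerProductSpace ℝ H] [CompleteSpace H]
    (g : H → ℝ) (hg : Differentiable ℝ g) (hgconv : StrictConvexOn ℝ Set.univ g)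
    (f : H → ℝ) (hf : ConvexOn ℝ Set.univ f) (hflsc : LowerSemicontinuous f)
    (D : H → H → ℝ)
    (hD : ∀ x y, D x y = g x - g y - ⟪gradient g y, x - y⟫)
    (T : H → H)
    (hT : ∀ x u, f (T x) + D (T x) x ≤ f u + D u x) :
    ∀ x y : H,
      ⟪T x - T y, gradient g (T x) - gradient g (T y)⟫
        ≤ ⟪T x - T y, gradient g x - gradient g y⟫ := by
  have key : ∀ x y : H,
      f (T x) - f (T y) + ⟪gradient g x, T y - T x⟫ ≤ ⟪gradient g (T x), T y - T x⟫ := by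
    intro x y
    set v := T y - T x with hv
    set L : ℝ := ⟪gradient g (T x), v⟫ with hL
    -- derivative of t ↦ g (T x + t • v) at 0 is L
    have hφ : HasDerivAt (fun t : ℝ => g (T x + t • v)) L 0 := by
      have h1 : HasDerivAt (fun t : ℝ => T x + t • v) v 0 := by
        simpa using ((hasDerivAt_id (0:ℝ)).smul_const v).const_add (T x)
      have h2 : HasGradientAt g (gradient g (T x)) (T x + (0:ℝ) • v) := by
        simpa using (hg (T x)).hasGradientAt
      have := h2.hasFDerivAt.comp_hasDerivAt 0 h1
      simpa [hL, Function.comp_def] using this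
    have hbound : ∀ t ∈ Set.Ioo (0:ℝ) 1,
        f (T x) - f (T y) + ⟪gradient g x, v⟫ ≤ (g (T x + t • v) - g (T x)) / t := by
      intro t ht
      have ht0 : 0 < t := ht.1
      have hconv : f (T x + t • v) ≤ (1 - t) * f (T x) + t * f (T y) := by
        have heq : (1 - t) • T x + t • T y = T x + t • v := by
          simp only [hv, smul_sub, sub_smul, one_smul]; abel
        have := hf.2 (Set.mem_univ (T x)) (Set.mem_univ (T y))
          (by linarith [ht.2] : (0:ℝ) ≤ 1 - t) ht0.le (by ring)
        rwa [heq] at this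
      have hmin := hT x (T x + t • v)
      rw [hD, hD] at hmin
      have hinner : ⟪gradient g x, T x + t • v - x⟫
          = ⟪gradient g x, T x - x⟫ + t * ⟪gradient g x, v⟫ := by
        have : T x + t • v - x = (T x - x) + t • v := by abel
        rw [this, inner_add_right, real_inner_smul_right]
      rw [hinner] at hmin
      have hstep : t * (f (T x) - f (T y) + ⟪gradient g x, v⟫)
          ≤ g (T x + t • v) - g (T x) := by nlinarith
      rw [le_div_iff₀ ht0]
      linarith [hstep]
    -- take the limit t → 0⁺
    have htend : Filter.Tendsto (fun t : ℝ => (g (T x + t • v) - g (T x)) / t)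
        (nhdsWithin 0 (Set.Ioi 0)) (nhds L) := by
      have := hasDerivAt_iff_tendsto_slope.mp hφ
      have h' := this.mono_left (nhdsWithin_mono 0 (by
        intro t ht
        exact ne_of_gt ht : Set.Ioi (0:ℝ) ⊆ {(0:ℝ)}ᶜ))
      refine h'.congr' ?_
      filter_upwards [self_mem_nhdsWithin] with t ht
      simp [slope_def_field, div_eq_inv_mul]
    have : f (T x) - f (T y) + ⟪gradient g x, v⟫ ≤ L := by
      refine ge_of_tendsto htend ?_
      filter_upwards [Ioo_mem_nhdsGT_of_mem (by norm_num : (0:ℝ) ∈ Set.Ico (0:ℝ) 1)]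
        with t ht using hbound t ht
    exact this
  intro x y
  have h1 := key x y
  have h2 := key y x
  rw [← real_inner_comm (T x - T y) (gradient g (T x) - gradient g (T y)),
    ← real_inner_comm (T x - T y) (gradient g x - gradient g y)]
  simp only [inner_sub_left, inner_sub_right] at *
  linarith
end

section
/- Let f and h be proper, lower semicontinuous, convex functions on a finite-dimensional real Hilbert space. Suppose argmin f ∩ dom(h) ≠ ∅, h is coercive and strictly convex, and h is uniformly convex on every closed ball. Then (i) h admits a unique minimizer x₀ over argmin f; (ii) for every ε ∈ (0, 1), the problem argmin_x [f(x) + ε·h(x)] admits a unique solution x_ε; and (iii) x_ε → x₀ as ε → 0. -/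
open Filter Set

open Filter Set Bornology Metric

/-- A continuous coercive function attains its minimum on a nonempty closed set
in a finite-dimensional normed space. -/
lemma my_exists_min_on_closed {E : Type*} [NormedAddCommGroup E] [NormedSpace ℝ E]
    [FiniteDimensional ℝ E] (g : E → ℝ) (hg : Continuous g)
    (hco : Tendsto g (Bornology.cobounded E) atTop) {s : Set E}
    (hs : IsClosed s) (hne : s.Nonempty) : ∃ x ∈ s, ∀ y ∈ s, g x ≤ g y := by
  obtain ⟨a, ha⟩ := hne
  have hmem : {x : E | g a < g x} ∈ Bornology.cobounded E :=
    hco.eventually (eventually_gt_atTop (g a))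
  have hbdd : Bornology.IsBounded {x : E | g x ≤ g a} := by
    rw [Bornology.isBounded_def]
    convert hmem using 1
    ext x; simp [not_le]
  have hK : IsCompact (s ∩ {x : E | g x ≤ g a}) :=
    Metric.isCompact_of_isClosed_isBounded
      (hs.inter (isClosed_le hg continuous_const)) (hbdd.subset inter_subset_right)
  obtain ⟨x, hxK, hx⟩ := hK.exists_isMinOn ⟨a, ha, (le_refl (g a) : a ∈ {x : E | g x ≤ g a})⟩ hg.continuousOn
  refine ⟨x, hxK.1, fun y hy => ?_⟩
  rcases le_or_gt (g y) (g a) with hya | hya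
  · exact hx ⟨hy, hya⟩
  · exact le_trans (hx ⟨ha, (le_refl (g a) : a ∈ {x : E | g x ≤ g a})⟩) hya.le

/-- Uniqueness of minimisers of a strictly convex function over a convex set. -/
lemma my_strict_min_unique {E : Type*} [NormedAddCommGroup E] [NormedSpace ℝ E]
    {g : E → ℝ} (hg : StrictConvexOn ℝ Set.univ g) {s : Set E} (hsconv : Convex ℝ s)
    {x y : E} (hx : x ∈ s) (hy : y ∈ s)
    (hxm : ∀ z ∈ s, g x ≤ g z) (hym : ∀ z ∈ s, g y ≤ g z) : x = y := by
  by_contra hne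
  have hmid : (1/2 : ℝ) • x + (1/2 : ℝ) • y ∈ s :=
    hsconv hx hy (by norm_num) (by norm_num) (by norm_num)
  have hlt := hg.2 (Set.mem_univ x) (Set.mem_univ y) hne
    (by norm_num : (0:ℝ) < 1/2) (by norm_num : (0:ℝ) < 1/2) (by norm_num)
  have h1 := hxm _ hmid
  have hxy : g x = g y := le_antisymm (hxm y hy) (hym x hx)
  simp only [smul_eq_mul] at hlt
  linarith

lemma my_strict_comb {E : Type*} [NormedAddCommGroup E] [NormedSpace ℝ E]
    {f h : E → ℝ} (hf : ConvexOn ℝ Set.univ f) (hh : StrictConvexOn ℝ Set.univ h)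
    {ε : ℝ} (hε : 0 < ε) : StrictConvexOn ℝ Set.univ (fun x => f x + ε * h x) := by
  refine ⟨convex_univ, fun x _ y _ hxy a b ha hb hab => ?_⟩
  have h1 := hf.2 (Set.mem_univ x) (Set.mem_univ y) ha.le hb.le hab
  have h2 := hh.2 (Set.mem_univ x) (Set.mem_univ y) hxy ha hb hab
  have h3 := mul_lt_mul_of_pos_left h2 hε
  simp only [smul_eq_mul] at *
  nlinarith


/-- Vanishing-regularisation limit (Bauschke–Combettes, Thm 26.20): for `f`, `h`
proper lsc convex on a finite-dimensional real Hilbert space, with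
`argmin f ≠ ∅`, `h` coercive, strictly convex and uniformly convex on every
closed ball, (i) `h` has a unique minimiser `x₀` over `argmin f`;
(ii) for each `ε ∈ (0,1)` the problem `min f + ε h` has a unique solution `x_ε`;
(iii) `x_ε → x₀` as `ε → 0⁺`. -/
theorem vanishing_regularization_limit
    {E : Type*} [NormedAddCommGroup E] [InnerProductSpace ℝ E]
    [FiniteDimensional ℝ E]
    (f h : E → ℝ)
    (hfconv : ConvexOn ℝ Set.univ f) (hflsc : LowerSemicontinuous f)
    (hhconv : ConvexOn ℝ Set.univ h) (hhlsc : LowerSemicontinuous h)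
    (hargmin : ∃ x : E, ∀ y : E, f x ≤ f y)
    (hcoercive : Tendsto h (Bornology.cobounded E) atTop)
    (hstrict : StrictConvexOn ℝ Set.univ h)
    (hunif : ∀ R : ℝ, ∃ φ : ℝ → ℝ, (∀ r : ℝ, 0 < r → 0 < φ r) ∧
      UniformConvexOn (Metric.closedBall (0 : E) R) φ h) :
    (∃! x₀ : E, (∀ y : E, f x₀ ≤ f y) ∧
        ∀ y : E, (∀ z : E, f y ≤ f z) → h x₀ ≤ h y) ∧
      (∀ ε ∈ Set.Ioo (0 : ℝ) 1,
        ∃! xε : E, ∀ y : E, f xε + ε * h xε ≤ f y + ε * h y) ∧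
      (∀ x₀ : E,
        ((∀ y : E, f x₀ ≤ f y) ∧ ∀ y : E, (∀ z : E, f y ≤ f z) → h x₀ ≤ h y) →
        ∀ sel : ℝ → E,
          (∀ ε ∈ Set.Ioo (0 : ℝ) 1,
            ∀ y : E, f (sel ε) + ε * h (sel ε) ≤ f y + ε * h y) →
          Tendsto sel (nhdsWithin 0 (Set.Ioi 0)) (nhds x₀)) := by
  clear hunif
  obtain ⟨xs, hxs⟩ := hargmin
  have hf_cont : Continuous f := by
    rw [← continuousOn_univ]; exact hfconv.continuousOn isOpen_univ
  have hh_cont : Continuous h := by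
    rw [← continuousOn_univ]; exact hhconv.continuousOn isOpen_univ
  set S : Set E := {y : E | ∀ z : E, f y ≤ f z} with hS
  have hS_eq : S = {y : E | f y ≤ f xs} := by
    ext y; constructor
    · exact fun hy => hy xs
    · exact fun hy z => le_trans hy (hxs z)
  have hS_closed : IsClosed S := by
    rw [hS_eq]; exact isClosed_le hf_cont continuous_const
  have hS_conv : Convex ℝ S := by
    rw [hS_eq]
    have := hfconv.convex_le (f xs)
    simpa using this
  have hS_ne : S.Nonempty := ⟨xs, hxs⟩
  -- Part (i)
  obtain ⟨x₀', hx₀'S, hx₀'min⟩ := my_exists_min_on_closed h hh_cont hcoercive hS_closed hS_ne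
  have part1 : ∃! x₀ : E, (∀ y : E, f x₀ ≤ f y) ∧
      ∀ y : E, (∀ z : E, f y ≤ f z) → h x₀ ≤ h y := by
    refine ⟨x₀', ⟨hx₀'S, fun y hy => hx₀'min y hy⟩, fun y hy => ?_⟩
    exact my_strict_min_unique hstrict hS_conv hy.1 hx₀'S
      (fun z hz => hy.2 z hz) (fun z hz => hx₀'min z hz)
  -- Part (ii)
  have part2 : ∀ ε ∈ Set.Ioo (0 : ℝ) 1,
      ∃! xε : E, ∀ y : E, f xε + ε * h xε ≤ f y + ε * h y := by
    intro ε hε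
    have hεpos : 0 < ε := hε.1
    have hcont : Continuous (fun x => f x + ε * h x) :=
      hf_cont.add (continuous_const.mul hh_cont)
    have hco : Tendsto (fun x => f x + ε * h x) (Bornology.cobounded E) atTop := by
      have h1 : Tendsto (fun x : E => f xs + ε * h x) (Bornology.cobounded E) atTop :=
        tendsto_atTop_add_const_left _ _ (hcoercive.const_mul_atTop hεpos)
      exact tendsto_atTop_mono (fun x => add_le_add_left (hxs x) _) h1
    obtain ⟨x, _, hxmin⟩ := my_exists_min_on_closed _ hcont hco isClosed_univ
      (Set.univ_nonempty)
    refine ⟨x, fun y => hxmin y (Set.mem_univ y), fun y hy => ?_⟩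
    exact my_strict_min_unique (my_strict_comb hfconv hstrict hεpos) convex_univ
      (Set.mem_univ y) (Set.mem_univ x) (fun z _ => hy z) (fun z _ => hxmin z (Set.mem_univ z))
  refine ⟨part1, part2, ?_⟩
  -- Part (iii)
  intro x₀ hx₀ sel hsel
  have hx₀S : x₀ ∈ S := hx₀.1
  -- basic estimates
  have key : ∀ ε ∈ Set.Ioo (0 : ℝ) 1, h (sel ε) ≤ h x₀ ∧
      f (sel ε) ≤ f x₀ + ε * (h x₀ - h (sel ε)) := by
    intro ε hε
    have hm := hsel ε hε x₀
    have h1 : f x₀ ≤ f (sel ε) := hx₀.1 _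
    have h2 : h (sel ε) ≤ h x₀ := by nlinarith [hε.1]
    exact ⟨h2, by nlinarith⟩
  -- the compact set K containing all sel ε and x₀
  have hmem : {x : E | h x₀ < h x} ∈ Bornology.cobounded E :=
    hcoercive.eventually (eventually_gt_atTop (h x₀))
  have hbdd : Bornology.IsBounded {x : E | h x ≤ h x₀} := by
    rw [Bornology.isBounded_def]
    convert hmem using 1
    ext x; simp [not_le]
  obtain ⟨R, hR⟩ := hbdd.subset_closedBall (0 : E)
  set R' : ℝ := max R ‖x₀‖ with hR'
  set K : Set E := Metric.closedBall (0 : E) R' with hKdef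
  have hx₀K : x₀ ∈ K := by
    simp only [hKdef, Metric.mem_closedBall, dist_zero_right]; exact le_max_right _ _
  have hselK : ∀ ε ∈ Set.Ioo (0 : ℝ) 1, sel ε ∈ K := by
    intro ε hε
    have := hR ((key ε hε).1 : sel ε ∈ {x : E | h x ≤ h x₀})
    exact Metric.closedBall_subset_closedBall (le_max_left _ _) this
  have hKcomp : IsCompact K := isCompact_closedBall _ _
  -- lower bound of h on K
  obtain ⟨b, hbK, hb⟩ := hKcomp.exists_isMinOn ⟨x₀, hx₀K⟩ hh_cont.continuousOn
  set B : ℝ := h b with hBdef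
  have hBle : ∀ x ∈ K, B ≤ h x := fun x hx => hb hx
  -- convergence via subsequences
  apply tendsto_of_subseq_tendsto
  intro ns hns
  have hIoo : Set.Ioo (0:ℝ) 1 ∈ nhdsWithin (0:ℝ) (Set.Ioi 0) :=
    Ioo_mem_nhdsGT_of_mem ⟨le_refl 0, zero_lt_one⟩
  obtain ⟨N, hN⟩ := (eventually_atTop.1 (hns.eventually hIoo))
  set y : ℕ → E := fun n => sel (ns (n + N)) with hy
  have hyK : ∀ n, y n ∈ K := fun n => hselK _ (hN (n + N) (Nat.le_add_left _ _))
  obtain ⟨xbar, hxbarK, φ, hφ, htend⟩ := hKcomp.tendsto_subseq hyK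
  set v : ℕ → ℝ := fun k => ns (φ k + N) with hv
  have hφatTop : Tendsto (fun k => φ k + N) atTop atTop :=
    tendsto_atTop_mono (fun k => le_trans hφ.le_apply (Nat.le_add_right _ _)) tendsto_id
  have hvtend : Tendsto v atTop (nhdsWithin (0:ℝ) (Set.Ioi 0)) := hns.comp hφatTop
  have hv0 : Tendsto v atTop (nhds (0:ℝ)) := hvtend.mono_right nhdsWithin_le_nhds
  have hvmem : ∀ k, v k ∈ Set.Ioo (0:ℝ) 1 := fun k => hN _ (Nat.le_add_left _ _)
  have hyv : ∀ k, y (φ k) = sel (v k) := fun k => rfl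
  -- h xbar ≤ h x₀
  have hhbar : h xbar ≤ h x₀ := by
    by_contra hlt
    push_neg at hlt
    have hev : ∀ᶠ z in nhds xbar, h x₀ < h z := hhlsc xbar (h x₀) hlt
    obtain ⟨k, hk⟩ := (htend.eventually hev).exists
    exact absurd ((key (v k) (hvmem k)).1) (not_le.2 hk)
  -- f xbar ≤ f x₀, hence xbar ∈ S
  have hfbar : xbar ∈ S := by
    have hfle : f xbar ≤ f x₀ := by
      by_contra hlt
      push_neg at hlt
      set c : ℝ := (f x₀ + f xbar) / 2 with hc
      have hc1 : c < f xbar := by rw [hc]; linarith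
      have hc2 : f x₀ < c := by rw [hc]; linarith
      have hev1 : ∀ᶠ k in atTop, c < f (y (φ k)) :=
        htend.eventually (hflsc xbar c hc1)
      have hmul : Tendsto (fun k => f x₀ + v k * (h x₀ - B)) atTop (nhds (f x₀)) := by
        have := (hv0.mul_const (h x₀ - B)).const_add (f x₀)
        simpa using this
      have hev2 : ∀ᶠ k in atTop, f x₀ + v k * (h x₀ - B) < c :=
        hmul.eventually_lt_const hc2
      obtain ⟨k, hk1, hk2⟩ := (hev1.and hev2).exists
      have hb1 : f (y (φ k)) ≤ f x₀ + v k * (h x₀ - h (y (φ k))) := (key (v k) (hvmem k)).2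
      have hb2 : B ≤ h (y (φ k)) := hBle _ (hyK _)
      have hvpos : 0 < v k := (hvmem k).1
      nlinarith
    exact fun z => le_trans hfle (hx₀.1 z)
  -- xbar = x₀
  have hxbar_eq : xbar = x₀ := by
    refine my_strict_min_unique hstrict hS_conv hfbar hx₀S ?_ ?_
    · exact fun z hz => le_trans hhbar (hx₀.2 z hz)
    · exact fun z hz => hx₀.2 z hz
  exact ⟨fun k => φ k + N, by rw [← hxbar_eq]; exact htend⟩
end
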